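/- For every x ≥ 0, 𝓑(x) ≤ 1/(1+x²). -/

import Mathlib

open MeasureTheory

noncomputable section

/-- The dyadic subinterval `[k/2^n, (k+1)/2^n]` of `[0,1]`. -/
def dyadicI (n k : ℕ) : Set ℝ := Set.Icc ((k : ℝ) / 2 ^ n) (((k : ℝ) + 1) / 2 ^ n)

/-- The Haar function of the dyadic interval `[k/2^n, (k+1)/2^n]`: it equals `-1` on the
left half of the interval, `+1` on its right half and `0` elsewhere. -/
def haar (n k : ℕ) (x : ℝ) : ℝ :=
  if x ∈ Set.Ico ((k : ℝ) / 2 ^ n) ((2 * (k : ℝ) + 1) / 2 ^ (n + 1)) then -1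
  else if x ∈ Set.Ico ((2 * (k : ℝ) + 1) / 2 ^ (n + 1)) (((k : ℝ) + 1) / 2 ^ n) then 1
  else 0

/-- The Haar coefficient `a_J = μ(J)⁻¹ ∫_I f h_J` of `f` at `J = [k/2^n, (k+1)/2^n]`. -/
def haarCoeff (f : ℝ → ℝ) (n k : ℕ) : ℝ :=
  2 ^ n * ∫ x in Set.Icc (0 : ℝ) 1, f x * haar n k x

/-- The dyadic square function `Sf = √(Σ_J a_J² χ_J)`. -/
def sqFn (f : ℝ → ℝ) (x : ℝ) : ℝ :=
  Real.sqrt (∑' p : ℕ × ℕ, (haarCoeff f p.1 p.2) ^ 2 * (dyadicI p.1 p.2).indicator 1 x)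

/-- A test function for the Bellman function: integrable on `I = [0,1]`, with zero mean
and with dyadic square function essentially bounded by `1` on `I`. -/
def Admissible (f : ℝ → ℝ) : Prop :=
  IntegrableOn f (Set.Icc 0 1) ∧ (∫ x in Set.Icc (0 : ℝ) 1, f x) = 0 ∧
    ∀ᵐ x ∂(volume.restrict (Set.Icc (0 : ℝ) 1)), sqFn f x ≤ 1

/-- The Bellman function `𝓑(x) = sup{ μ{f ≥ x} : ∫_I f = 0, ‖Sf‖_∞ ≤ 1 }`. -/
def bellman (x : ℝ) : ℝ :=
  sSup { m : ℝ | ∃ f : ℝ → ℝ, Admissible f ∧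
    m = (volume { y ∈ Set.Icc (0 : ℝ) 1 | x ≤ f y }).toReal }

namespace BP

open Set Filter Topology

/-! ### Dyadic intervals and indices -/

/-- The half-open dyadic interval `[k/2^n, (k+1)/2^n)`. -/
def Jd (n k : ℕ) : Set ℝ := Set.Ico ((k : ℝ) / 2 ^ n) (((k : ℝ) + 1) / 2 ^ n)

/-- `f` extended by zero outside `[0,1]`. -/
def FF (f : ℝ → ℝ) : ℝ → ℝ := (Set.Icc (0 : ℝ) 1).indicator f

/-- average of `FF f` over `Jd n k`. -/
def cc (f : ℝ → ℝ) (n k : ℕ) : ℝ := 2 ^ n * ∫ t in Jd n k, FF f t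

/-- average of `|FF f|` over `Jd n k`. -/
def dd (f : ℝ → ℝ) (n k : ℕ) : ℝ := 2 ^ n * ∫ t in Jd n k, |FF f t|

/-- index of the dyadic interval of generation `n` containing `x`. -/
def kidx (n : ℕ) (x : ℝ) : ℕ := ⌊2 ^ n * x⌋₊

/-- midpoint of `Jd n k` -/
def md (n k : ℕ) : ℝ := (2 * (k : ℝ) + 1) / 2 ^ (n + 1)

lemma Jd_meas (n k : ℕ) : MeasurableSet (Jd n k) := measurableSet_Ico

lemma md_lb (n k : ℕ) : (k : ℝ) / 2 ^ n ≤ md n k := by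
  rw [md, div_le_div_iff₀ (by positivity) (by positivity)]
  ring_nf
  nlinarith [pow_pos (show (0:ℝ)<2 by norm_num) n]

lemma md_ub (n k : ℕ) : md n k ≤ ((k : ℝ) + 1) / 2 ^ n := by
  rw [md, div_le_div_iff₀ (by positivity) (by positivity)]
  ring_nf
  nlinarith [pow_pos (show (0:ℝ)<2 by norm_num) n]

lemma Jd_left (n k : ℕ) : Jd (n+1) (2*k) = Set.Ico ((k : ℝ) / 2 ^ n) (md n k) := by
  unfold Jd md; congr 1 <;> push_cast <;> ring

lemma Jd_right (n k : ℕ) : Jd (n+1) (2*k+1) = Set.Ico (md n k) (((k : ℝ) + 1) / 2 ^ n) := by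
  unfold Jd md; congr 1 <;> push_cast <;> ring

lemma Jd_split (n k : ℕ) : Jd n k = Jd (n+1) (2*k) ∪ Jd (n+1) (2*k+1) := by
  rw [Jd_left, Jd_right, Set.Ico_union_Ico_eq_Ico (md_lb n k) (md_ub n k)]; rfl

lemma Jd_disj (n : ℕ) {k k' : ℕ} (h : k ≠ k') : Disjoint (Jd n k) (Jd n k') := by
  unfold Jd
  rw [Set.Ico_disjoint_Ico]
  rcases h.lt_or_gt with h | h
  · refine le_trans (min_le_left _ _) (le_trans ?_ (le_max_right _ _))
    apply div_le_div_of_nonneg_right ?_ (by positivity) |>.trans_eq rfl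
    exact_mod_cast Nat.succ_le_of_lt h
  · refine le_trans (min_le_right _ _) (le_trans ?_ (le_max_left _ _))
    apply div_le_div_of_nonneg_right ?_ (by positivity) |>.trans_eq rfl
    exact_mod_cast Nat.succ_le_of_lt h

lemma Jd_subset (n : ℕ) {k : ℕ} (h : k < 2 ^ n) : Jd n k ⊆ Set.Ico (0:ℝ) 1 := by
  unfold Jd
  apply Set.Ico_subset_Ico
  · positivity
  · rw [div_le_one (by positivity)]
    have : (k : ℝ) + 1 ≤ (2:ℝ) ^ n := by exact_mod_cast Nat.succ_le_of_lt h
    simpa using this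

lemma vol_Jd (n k : ℕ) : volume (Jd n k) = ENNReal.ofReal ((1:ℝ) / 2 ^ n) := by
  rw [Jd, Real.volume_Ico]
  congr 1; ring

lemma kidx_eq {n k : ℕ} {x : ℝ} (h : x ∈ Jd n k) : kidx n x = k := by
  obtain ⟨h1, h2⟩ := h
  have hp : (0:ℝ) < 2 ^ n := by positivity
  rw [kidx, Nat.floor_eq_iff]
  · constructor
    · rwa [div_le_iff₀ hp, mul_comm] at h1
    · push_cast; rwa [lt_div_iff₀ hp, mul_comm] at h2
  · calc (0:ℝ) ≤ 2 ^ n * ((k:ℝ)/2^n) := by positivity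
    _ ≤ 2 ^ n * x := by nlinarith

lemma kidx_mem {x : ℝ} (hx : x ∈ Set.Ico (0:ℝ) 1) (n : ℕ) : x ∈ Jd n (kidx n x) := by
  have hp : (0:ℝ) < 2 ^ n := by positivity
  have h0 : (0:ℝ) ≤ 2 ^ n * x := mul_nonneg hp.le hx.1
  constructor
  · rw [div_le_iff₀ hp, mul_comm]; exact Nat.floor_le h0
  · rw [lt_div_iff₀ hp, mul_comm]; push_cast; exact Nat.lt_floor_add_one _

lemma kidx_lt {x : ℝ} (hx : x ∈ Set.Ico (0:ℝ) 1) (n : ℕ) : kidx n x < 2 ^ n := by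
  have hp : (0:ℝ) < 2 ^ n := by positivity
  rw [kidx, Nat.floor_lt (mul_nonneg hp.le hx.1)]
  push_cast
  nlinarith [hx.2]

lemma kidx_div {x : ℝ} (hx : (0:ℝ) ≤ x) {m j : ℕ} (h : j ≤ m) :
    kidx m x / 2 ^ (m - j) = kidx j x := by
  rw [kidx, kidx, ← Nat.floor_div_natCast]
  congr 1
  have h2 : (2:ℝ) ^ m = 2 ^ j * 2 ^ (m - j) := by rw [← pow_add]; congr 1; omega
  push_cast
  field_simp
  rw [h2]; ring

/-! ### Integral recurrences -/

variable {f : ℝ → ℝ}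

lemma rec_gen (g : ℝ → ℝ) (hg : Integrable g) (n k : ℕ) :
    (2:ℝ) ^ n * ∫ t in Jd n k, g t =
      ((2 ^ (n+1) * ∫ t in Jd (n+1) (2*k), g t)
        + (2 ^ (n+1) * ∫ t in Jd (n+1) (2*k+1), g t)) / 2 := by
  rw [Jd_split n k, setIntegral_union (Jd_disj (n+1) (by omega)) (Jd_meas _ _)
    hg.integrableOn hg.integrableOn]
  ring

lemma cc_rec (hf : Integrable (FF f)) (n k : ℕ) :
    cc f n k = (cc f (n+1) (2*k) + cc f (n+1) (2*k+1)) / 2 := rec_gen _ hf n k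

lemma dd_rec (hf : Integrable (FF f)) (n k : ℕ) :
    dd f n k = (dd f (n+1) (2*k) + dd f (n+1) (2*k+1)) / 2 := rec_gen _ hf.abs n k

lemma dd_nonneg (n k : ℕ) : 0 ≤ dd f n k := by
  apply mul_nonneg (by positivity)
  apply setIntegral_nonneg (Jd_meas n k)
  intro t _; exact abs_nonneg _

lemma abs_cc_le (n k : ℕ) : |cc f n k| ≤ dd f n k := by
  rw [cc, dd, abs_mul, abs_of_nonneg (by positivity : (0:ℝ) ≤ (2:ℝ)^n)]
  apply mul_le_mul_of_nonneg_left ?_ (by positivity)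
  simpa using norm_integral_le_integral_norm (μ := volume.restrict (Jd n k)) (FF f)

/-! ### The Haar coefficient identity -/

lemma haar_eq (n k : ℕ) (x : ℝ) :
    f x * haar n k x = (Jd (n+1) (2*k)).indicator (fun t => -f t) x
      + (Jd (n+1) (2*k+1)).indicator f x := by
  rw [haar, Jd_left, Jd_right]
  simp only [md]
  by_cases h1 : x ∈ Set.Ico ((k : ℝ) / 2 ^ n) ((2 * (k:ℝ) + 1) / 2 ^ (n+1))
  · have h2 : x ∉ Set.Ico ((2 * (k:ℝ) + 1) / 2 ^ (n+1)) (((k : ℝ) + 1) / 2 ^ n) :=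
      fun h => absurd h1.2 (not_lt.2 h.1)
    rw [Set.indicator_of_mem h1, Set.indicator_of_notMem h2, if_pos h1]
    ring
  · rw [Set.indicator_of_notMem h1, if_neg h1]
    by_cases h2 : x ∈ Set.Ico ((2 * (k:ℝ) + 1) / 2 ^ (n+1)) (((k : ℝ) + 1) / 2 ^ n)
    · rw [Set.indicator_of_mem h2, if_pos h2]; ring
    · rw [Set.indicator_of_notMem h2, if_neg h2]; ring

lemma haarCoeff_eq (hf : IntegrableOn f (Set.Icc 0 1) volume) {n k : ℕ} (hk : k < 2 ^ n) :
    haarCoeff f n k = (cc f (n+1) (2*k+1) - cc f (n+1) (2*k)) / 2 := by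
  have hsubL : Jd (n+1) (2*k) ⊆ Set.Icc (0:ℝ) 1 :=
    (Jd_subset (n+1) (by omega)).trans Set.Ico_subset_Icc_self
  have hsubR : Jd (n+1) (2*k+1) ⊆ Set.Icc (0:ℝ) 1 :=
    (Jd_subset (n+1) (by omega)).trans Set.Ico_subset_Icc_self
  have hiL : Integrable ((Jd (n+1) (2*k)).indicator (fun t => -f t)) volume :=
    MeasureTheory.IntegrableOn.integrable_indicator (hf.mono_set hsubL).neg (Jd_meas _ _)
  have hiR : Integrable ((Jd (n+1) (2*k+1)).indicator f) volume :=
    MeasureTheory.IntegrableOn.integrable_indicator (hf.mono_set hsubR) (Jd_meas _ _)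
  have key : ∀ (s : Set ℝ) (g : ℝ → ℝ), s ⊆ Set.Icc (0:ℝ) 1 → MeasurableSet s →
      (∫ x in Set.Icc (0:ℝ) 1, s.indicator g x) = ∫ t in s, g t := by
    intro s g hs hms
    rw [setIntegral_indicator hms, Set.inter_eq_self_of_subset_right hs]
  have hFF : ∀ (s : Set ℝ), s ⊆ Set.Icc (0:ℝ) 1 → MeasurableSet s →
      (∫ t in s, f t) = ∫ t in s, FF f t := by
    intro s hs hms
    exact setIntegral_congr_fun hms (fun t ht => (Set.indicator_of_mem (hs ht) f).symm)
  rw [haarCoeff]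
  have : (∫ x in Set.Icc (0:ℝ) 1, f x * haar n k x)
      = (∫ x in Set.Icc (0:ℝ) 1, ((Jd (n+1) (2*k)).indicator (fun t => -f t) x
          + (Jd (n+1) (2*k+1)).indicator f x)) := by
    apply integral_congr_ae; filter_upwards with x using haar_eq n k x
  rw [this, integral_add hiL.integrableOn hiR.integrableOn,
    key _ _ hsubL (Jd_meas _ _), key _ _ hsubR (Jd_meas _ _),
    integral_neg, hFF _ hsubL (Jd_meas _ _), hFF _ hsubR (Jd_meas _ _)]
  rw [cc, cc]
  field_simp
  ring

/-! ### step functions adapted to the dyadic grid -/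

lemma unit_eq_biUnion (n : ℕ) : Set.Ico (0:ℝ) 1 = ⋃ k ∈ Finset.range (2^n), Jd n k := by
  ext x
  simp only [Set.mem_iUnion, Finset.mem_range]
  constructor
  · intro hx; exact ⟨kidx n x, kidx_lt hx n, kidx_mem hx n⟩
  · rintro ⟨k, hk, hx⟩; exact Jd_subset n hk hx

lemma measurable_kidx (n : ℕ) : Measurable (kidx n) := by
  apply Measurable.comp (f := fun x : ℝ => 2 ^ n * x) (g := fun y : ℝ => ⌊y⌋₊)
  · exact Nat.measurable_floor
  · exact (measurable_id.const_mul _)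

lemma step_integrableOn (φ : ℕ → ℝ) (n : ℕ) :
    IntegrableOn (fun x => φ (kidx n x)) (Set.Ico (0:ℝ) 1) := by
  rw [unit_eq_biUnion n]
  rw [integrableOn_finset_iUnion]
  intro k _
  apply IntegrableOn.congr_fun (f := fun _ => φ k)
  · exact integrableOn_const (by rw [vol_Jd]; exact ENNReal.ofReal_lt_top.ne)
  · intro x hx; show φ k = φ (kidx n x); rw [kidx_eq hx]
  · exact Jd_meas n k

lemma step_integral (φ : ℕ → ℝ) (n : ℕ) :
    (∫ x in Set.Ico (0:ℝ) 1, φ (kidx n x)) = ∑ k ∈ Finset.range (2^n), φ k / 2 ^ n := by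
  rw [unit_eq_biUnion n,
    integral_biUnion_finset _ (fun k _ => Jd_meas n k)
      (fun k _ k' _ h => Jd_disj n h)
      (fun k _ => by
        apply IntegrableOn.congr_fun (f := fun _ => φ k)
        · exact integrableOn_const (by rw [vol_Jd]; exact ENNReal.ofReal_lt_top.ne)
        · intro x hx; show φ k = φ (kidx n x); rw [kidx_eq hx]
        · exact Jd_meas n k)]
  apply Finset.sum_congr rfl
  intro k _
  rw [setIntegral_congr_fun (Jd_meas n k) (g := fun _ => φ k) (fun x hx => by rw [kidx_eq hx]),
    setIntegral_const, measureReal_def, vol_Jd, ENNReal.toReal_ofReal (by positivity), smul_eq_mul]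
  ring

lemma step_measure (n : ℕ) (p : ℕ → Prop) [DecidablePred p] :
    volume {x ∈ Set.Ico (0:ℝ) 1 | p (kidx n x)}
      = ∑ k ∈ (Finset.range (2^n)).filter p, ENNReal.ofReal ((1:ℝ) / 2 ^ n) := by
  have : {x ∈ Set.Ico (0:ℝ) 1 | p (kidx n x)} = ⋃ k ∈ (Finset.range (2^n)).filter p, Jd n k := by
    ext x
    simp only [Set.mem_iUnion, Finset.mem_filter, Finset.mem_range, Set.mem_setOf_eq]
    constructor
    · rintro ⟨hx, hp⟩; exact ⟨kidx n x, ⟨kidx_lt hx n, hp⟩, kidx_mem hx n⟩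
    · rintro ⟨k, ⟨hk, hp⟩, hx⟩; exact ⟨Jd_subset n hk hx, by rwa [kidx_eq hx]⟩
  rw [this, measure_biUnion_finset (fun k _ k' _ h => Jd_disj n h) (fun k _ => Jd_meas n k)]
  exact Finset.sum_congr rfl (fun k _ => vol_Jd n k)

/-! ### sum algebra -/

lemma pair_sum (g : ℕ → ℝ) (n : ℕ) :
    ∑ i ∈ Finset.range (2*n), g i = ∑ i ∈ Finset.range n, (g (2*i) + g (2*i+1)) := by
  induction n with
  | zero => simp
  | succ m ih =>
      have h2 : 2*(m+1) = (2*m)+1+1 := by ring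
      rw [h2, Finset.sum_range_succ, Finset.sum_range_succ, Finset.sum_range_succ, ih]
      ring

lemma range_pow_succ_sum (g : ℕ → ℝ) (n : ℕ) :
    ∑ i ∈ Finset.range (2^(n+1)), g i = ∑ i ∈ Finset.range (2^n), (g (2*i) + g (2*i+1)) := by
  rw [pow_succ, mul_comm]; exact pair_sum g (2^n)

/-- sum of averages is constant -/
lemma sum_cc (hf : Integrable (FF f)) (n : ℕ) :
    ∑ k ∈ Finset.range (2^n), cc f n k / 2^n = cc f 0 0 := by
  induction n with
  | zero => simp
  | succ m ih =>
      rw [range_pow_succ_sum, ← ih]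
      apply Finset.sum_congr rfl
      intro k _
      rw [cc_rec hf m k, pow_succ]
      ring

/-- dyadic Parseval step -/
lemma Q_succ (hf : IntegrableOn f (Set.Icc 0 1) volume) (hFi : Integrable (FF f)) (n : ℕ) :
    ∑ k ∈ Finset.range (2^(n+1)), (cc f (n+1) k)^2 / 2^(n+1)
      = ∑ k ∈ Finset.range (2^n), (cc f n k)^2 / 2^n
        + ∑ k ∈ Finset.range (2^n), (haarCoeff f n k)^2 / 2^n := by
  rw [range_pow_succ_sum, ← Finset.sum_add_distrib]
  apply Finset.sum_congr rfl
  intro k hk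
  rw [Finset.mem_range] at hk
  rw [cc_rec hFi n k, haarCoeff_eq hf hk, pow_succ]
  ring

/-! ### stopping times -/

/-- the dyadic atom `(n, k)` or one of its ancestors has `|f|`-average exceeding `lam` -/
def stopped (f : ℝ → ℝ) (lam : ℝ) (n k : ℕ) : Prop := ∃ m ≤ n, lam < dd f m (k / 2^(n-m))

open scoped Classical in
/-- the averages of `f` stopped at the stopping time -/
def chat (f : ℝ → ℝ) (lam : ℝ) : ℕ → ℕ → ℝ
  | 0, k => cc f 0 k
  | (n+1), k => if stopped f lam n (k/2) then chat f lam n (k/2) else cc f (n+1) k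

variable {lam : ℝ}

lemma anc_div (n m j : ℕ) (hm : m ≤ n) : j / 2 / 2^(n-m) = j / 2^(n+1-m) := by
  rw [Nat.div_div_eq_div_mul]
  congr 1
  rw [← pow_succ']
  congr 1
  omega

lemma stopped_succ (n j : ℕ) :
    stopped f lam (n+1) j ↔ stopped f lam n (j/2) ∨ lam < dd f (n+1) j := by
  constructor
  · rintro ⟨m, hm, h⟩
    rcases eq_or_lt_of_le hm with rfl | hlt
    · right; simpa using h
    · left
      exact ⟨m, by omega, by rwa [anc_div n m j (by omega)]⟩
  · rintro (⟨m, hm, h⟩ | h)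
    · exact ⟨m, by omega, by rw [← anc_div n m j hm]; exact h⟩
    · exact ⟨n+1, le_rfl, by simpa using h⟩

lemma not_stopped_mono {n j : ℕ} (h : ¬ stopped f lam (n+1) j) : ¬ stopped f lam n (j/2) :=
  fun hs => h ((stopped_succ n j).2 (Or.inl hs))

lemma not_stopped_dd {n k : ℕ} (h : ¬ stopped f lam n k) : dd f n k ≤ lam := by
  by_contra hh
  exact h ⟨n, le_rfl, by simpa using not_le.1 hh⟩

lemma chat_eq_cc : ∀ {n k : ℕ}, ¬ stopped f lam n k → chat f lam n k = cc f n k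
  | 0, _, _ => rfl
  | (n+1), k, h => by rw [chat, if_neg (not_stopped_mono h)]

lemma dd_child (hFi : Integrable (FF f)) (n j : ℕ) : dd f (n+1) j ≤ 2 * dd f n (j/2) := by
  have hj : j = 2*(j/2) ∨ j = 2*(j/2)+1 := by omega
  have hrec := dd_rec hFi n (j/2)
  rcases hj with hj | hj
  · have e : dd f (n+1) j = dd f (n+1) (2*(j/2)) := by rw [← hj]
    rw [e]
    linarith [dd_nonneg (f := f) (n+1) (2*(j/2)+1)]
  · have e : dd f (n+1) j = dd f (n+1) (2*(j/2)+1) := by rw [← hj]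
    rw [e]
    linarith [dd_nonneg (f := f) (n+1) (2*(j/2))]

lemma chat_bound (hFi : Integrable (FF f)) (h0 : dd f 0 0 ≤ lam) :
    ∀ n, ∀ k < 2^n, |chat f lam n k| ≤ 2*lam := by
  have hlam : 0 ≤ lam := le_trans (dd_nonneg 0 0) h0
  intro n
  induction n with
  | zero =>
      intro k hk
      interval_cases k
      calc |chat f lam 0 0| = |cc f 0 0| := by rw [show chat f lam 0 0 = cc f 0 0 from rfl]
      _ ≤ dd f 0 0 := abs_cc_le 0 0
      _ ≤ 2 * lam := by linarith
  | succ n ih =>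
      intro j hj
      have hj2 : j / 2 < 2 ^ n := by
        have : 2^(n+1) = 2*2^n := by rw [pow_succ]; ring
        omega
      rw [chat]
      split
      · exact ih _ hj2
      · next hns =>
        calc |cc f (n+1) j| ≤ dd f (n+1) j := abs_cc_le _ _
        _ ≤ 2 * dd f n (j/2) := dd_child hFi n j
        _ ≤ 2 * lam := by have := not_stopped_dd hns; linarith

open scoped Classical in
lemma Qhat_succ (hf : IntegrableOn f (Set.Icc 0 1) volume) (hFi : Integrable (FF f)) (n : ℕ) :
    ∑ k ∈ Finset.range (2^(n+1)), (chat f lam (n+1) k)^2 / 2^(n+1)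
      = ∑ k ∈ Finset.range (2^n), (chat f lam n k)^2 / 2^n
        + ∑ k ∈ Finset.range (2^n),
            (if stopped f lam n k then 0 else (haarCoeff f n k)^2) / 2^n := by
  rw [range_pow_succ_sum, ← Finset.sum_add_distrib]
  apply Finset.sum_congr rfl
  intro k hk
  rw [Finset.mem_range] at hk
  have e1 : (2*k)/2 = k := by omega
  have e2 : (2*k+1)/2 = k := by omega
  rw [chat, chat, e1, e2]
  by_cases hs : stopped f lam n k
  · rw [if_pos hs, if_pos hs, if_pos hs, pow_succ]
    ring
  · rw [if_neg hs, if_neg hs, if_neg hs, chat_eq_cc hs, cc_rec hFi n k, haarCoeff_eq hf hk,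
      pow_succ]
    ring

open scoped Classical in
lemma Bhat_bound (hf : IntegrableOn f (Set.Icc 0 1) volume) (hFi : Integrable (FF f))
    (h0 : dd f 0 0 ≤ lam) (n : ℕ) :
    ∑ m ∈ Finset.range n, (∑ k ∈ Finset.range (2^m),
      (if stopped f lam m k then 0 else (haarCoeff f m k)^2) / 2^m) ≤ 4 * lam^2 := by
  have hlam : 0 ≤ lam := le_trans (dd_nonneg 0 0) h0
  have key : ∀ n, ∑ k ∈ Finset.range (2^n), (chat f lam n k)^2 / 2^n
      = (cc f 0 0)^2 + ∑ m ∈ Finset.range n, (∑ k ∈ Finset.range (2^m),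
        (if stopped f lam m k then 0 else (haarCoeff f m k)^2) / 2^m) := by
    intro n
    induction n with
    | zero => simp [chat]
    | succ m ih => rw [Qhat_succ hf hFi, ih, Finset.sum_range_succ]; ring
  have hQ : ∑ k ∈ Finset.range (2^n), (chat f lam n k)^2 / 2^n ≤ 4 * lam^2 := by
    calc ∑ k ∈ Finset.range (2^n), (chat f lam n k)^2 / 2^n
        ≤ ∑ k ∈ Finset.range (2^n), (2*lam)^2 / 2^n := by
          apply Finset.sum_le_sum
          intro k hk
          apply div_le_div_of_nonneg_right ?_ (by positivity) |>.trans_eq rfl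
          have := chat_bound hFi h0 n k (Finset.mem_range.1 hk)
          nlinarith [abs_nonneg (chat f lam n k), sq_abs (chat f lam n k)]
        _ = 4 * lam^2 := by
          rw [Finset.sum_const, Finset.card_range, nsmul_eq_mul]
          field_simp
          push_cast
          ring
  have := key n
  nlinarith [sq_nonneg (cc f 0 0)]

/-! ### Lebesgue differentiation along dyadic intervals -/

lemma ball_eq_Icc (n k : ℕ) :
    Metric.closedBall ((k:ℝ)/2^n + 1/2^(n+1)) (1/2^(n+1))
      = Set.Icc ((k:ℝ)/2^n) (((k:ℝ)+1)/2^n) := by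
  rw [Real.closedBall_eq_Icc,
    show (k:ℝ)/2^n + 1/2^(n+1) - 1/2^(n+1) = (k:ℝ)/2^n by ring,
    show (k:ℝ)/2^n + 1/2^(n+1) + 1/2^(n+1) = ((k:ℝ)+1)/2^n by rw [pow_succ]; field_simp; ring]

lemma delta_tendsto : Tendsto (fun n : ℕ => (1:ℝ)/2^(n+1)) atTop (𝓝[>] 0) := by
  rw [tendsto_nhdsWithin_iff]
  constructor
  · have h := tendsto_pow_atTop_nhds_zero_of_lt_one (by norm_num : (0:ℝ) ≤ 1/2) (by norm_num)
    have h2 := h.comp (tendsto_add_atTop_nat 1)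
    apply h2.congr
    intro n
    simp [div_pow]
  · exact Eventually.of_forall fun n => Set.mem_Ioi.2 (by positivity)

lemma avg_eq_cc (g : ℝ → ℝ) (n k : ℕ) :
    (⨍ y in Metric.closedBall ((k:ℝ)/2^n + 1/2^(n+1)) (1/2^(n+1)), g y)
      = 2^n * ∫ t in Jd n k, g t := by
  rw [ball_eq_Icc, setAverage_eq]
  have hv : volume (Set.Icc ((k:ℝ)/2^n) (((k:ℝ)+1)/2^n)) = ENNReal.ofReal ((1:ℝ)/2^n) := by
    rw [Real.volume_Icc]; congr 1; ring
  rw [measureReal_def, hv, ENNReal.toReal_ofReal (by positivity), smul_eq_mul]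
  have : (∫ t in Set.Icc ((k:ℝ)/2^n) (((k:ℝ)+1)/2^n), g t) = ∫ t in Jd n k, g t := by
    apply setIntegral_congr_set
    exact Ico_ae_eq_Icc.symm
  rw [this]
  congr 1
  field_simp

lemma ae_conv (g : ℝ → ℝ) (hg : Integrable g volume) :
    ∀ᵐ x : ℝ, x ∈ Set.Ico (0:ℝ) 1 →
      Tendsto (fun n => 2^n * ∫ t in Jd n (kidx n x), g t) atTop (𝓝 (g x)) := by
  filter_upwards [IsUnifLocDoublingMeasure.ae_tendsto_average (μ := volume)
    hg.locallyIntegrable 1] with x hx hx01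
  have hmem : ∀ᶠ n in atTop, x ∈ Metric.closedBall
      ((kidx n x : ℝ)/2^n + 1/2^(n+1)) (1 * (1/2^(n+1))) := by
    apply Eventually.of_forall
    intro n
    rw [one_mul, ball_eq_Icc]
    exact Set.Ico_subset_Icc_self (kidx_mem hx01 n)
  have h := hx (fun n => ((kidx n x : ℝ)/2^n + 1/2^(n+1))) (fun n => (1:ℝ)/2^(n+1))
    delta_tendsto hmem
  apply h.congr
  intro n
  exact avg_eq_cc g n (kidx n x)

/-! ### a.e. boundedness from uniform integral bounds -/

lemma ae_bdd {T : ℕ → ℝ → ℝ} (hmeas : ∀ n, Measurable (T n)) (hnn : ∀ n x, 0 ≤ T n x)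
    (hmono : ∀ n x, T n x ≤ T (n+1) x) (C : ℝ)
    (hTi : ∀ n, IntegrableOn (T n) (Set.Ico (0:ℝ) 1))
    (hint : ∀ n, (∫ x in Set.Ico (0:ℝ) 1, T n x) ≤ C) :
    ∀ᵐ x : ℝ, x ∈ Set.Ico (0:ℝ) 1 → ∃ M : ℝ, ∀ n, T n x ≤ M := by
  set μ := volume.restrict (Set.Ico (0:ℝ) 1) with hμ
  have hG : ∀ n, ∫⁻ x, ENNReal.ofReal (T n x) ∂μ ≤ ENNReal.ofReal C := by
    intro n
    rw [← ofReal_integral_eq_lintegral_ofReal (hTi n)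
      (Eventually.of_forall fun x => hnn n x)]
    exact ENNReal.ofReal_le_ofReal (hint n)
  have hsup : ∫⁻ x, (⨆ n, ENNReal.ofReal (T n x)) ∂μ ≤ ENNReal.ofReal C := by
    rw [lintegral_iSup (fun n => (hmeas n).ennreal_ofReal)
      (monotone_nat_of_le_succ (fun n x => ENNReal.ofReal_le_ofReal (hmono n x)))]
    exact iSup_le hG
  have hae : ∀ᵐ x ∂μ, (⨆ n, ENNReal.ofReal (T n x)) < ⊤ :=
    ae_lt_top (by measurability) (lt_of_le_of_lt hsup ENNReal.ofReal_lt_top).ne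
  rw [hμ, ae_restrict_iff' measurableSet_Ico] at hae
  filter_upwards [hae] with x hx hx01
  refine ⟨(⨆ n, ENNReal.ofReal (T n x)).toReal, fun n => ?_⟩
  have h1 : ENNReal.ofReal (T n x) ≤ ⨆ n, ENNReal.ofReal (T n x) :=
    le_iSup (fun n => ENNReal.ofReal (T n x)) n
  have := ENNReal.toReal_mono (hx hx01).ne h1
  rwa [ENNReal.toReal_ofReal (hnn n x)] at this


/-! ### a.e. summability of the squared Haar coefficients along dyadic ancestry -/

lemma kidx_zero {x : ℝ} (hx : x ∈ Set.Ico (0:ℝ) 1) : kidx 0 x = 0 := by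
  rw [kidx]
  rw [Nat.floor_eq_zero]
  simpa using hx.2

open scoped Classical in
lemma summable_ae (hf : IntegrableOn f (Set.Icc 0 1) volume) (hFi : Integrable (FF f)) :
    ∀ᵐ x : ℝ, x ∈ Set.Ico (0:ℝ) 1 → Summable (fun m => (haarCoeff f m (kidx m x))^2) := by
  have H : ∀ lam : ℕ, ∀ᵐ x : ℝ, x ∈ Set.Ico (0:ℝ) 1 → (dd f 0 0 ≤ (lam:ℝ) →
      ∃ M : ℝ, ∀ n, (∑ m ∈ Finset.range n,
        (if stopped f (lam:ℝ) m (kidx m x) then 0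
          else (haarCoeff f m (kidx m x))^2)) ≤ M) := by
    intro lam
    by_cases h0 : dd f 0 0 ≤ (lam:ℝ)
    · set φ : ℕ → ℕ → ℝ := fun m k =>
        if stopped f (lam:ℝ) m k then 0 else (haarCoeff f m k)^2 with hφ
      have hψnn : ∀ m k, 0 ≤ φ m k := by
        intro m k; rw [hφ]; dsimp only; split
        · exact le_rfl
        · positivity
      have := ae_bdd (T := fun n x => ∑ m ∈ Finset.range n, φ m (kidx m x))
        (fun n => Finset.measurable_sum _
          (fun m _ => by exact Measurable.comp (g := φ m) measurable_from_nat (measurable_kidx m)))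
        (fun n x => Finset.sum_nonneg (fun m _ => hψnn m _))
        (fun n x => by
          rw [Finset.sum_range_succ]
          exact le_add_of_nonneg_right (hψnn n _))
        (4*(lam:ℝ)^2)
        (fun n => integrable_finset_sum _ (fun m _ => step_integrableOn (φ m) m))
        (fun n => by
          rw [integral_finset_sum _ (fun m _ => step_integrableOn (φ m) m)]
          have : ∀ m ∈ Finset.range n,
              (∫ x in Set.Ico (0:ℝ) 1, φ m (kidx m x))
                = ∑ k ∈ Finset.range (2^m), φ m k / 2^m :=
            fun m _ => step_integral (φ m) m
          rw [Finset.sum_congr rfl this]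
          exact Bhat_bound hf hFi h0 n)
      filter_upwards [this] with x hx hx01 _
      exact hx hx01
    · filter_upwards with x _ hc
      exact absurd hc h0
  filter_upwards [ae_all_iff.2 H, ae_conv (fun t => |FF f t|) hFi.abs] with x hH hconv hx01
  have hdd : Tendsto (fun n => dd f n (kidx n x)) atTop (𝓝 (|FF f x|)) := hconv hx01
  obtain ⟨B, hB⟩ := hdd.bddAbove_range
  have hBd : ∀ n, dd f n (kidx n x) ≤ B := fun n => hB (Set.mem_range_self n)
  obtain ⟨lam, hlam⟩ := exists_nat_ge B
  have h00 : dd f 0 0 ≤ (lam:ℝ) := by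
    have := hBd 0
    rw [kidx_zero hx01] at this
    linarith
  obtain ⟨M, hM⟩ := hH lam hx01 h00
  have hns : ∀ m, ¬ stopped f (lam:ℝ) m (kidx m x) := by
    rintro m ⟨j, hj, hlt⟩
    rw [kidx_div hx01.1 hj] at hlt
    exact absurd (le_trans (hBd j) hlam) (not_le.2 hlt)
  apply summable_of_sum_range_le (c := M) (fun m => by positivity)
  intro n
  have : ∀ m ∈ Finset.range n,
      (haarCoeff f m (kidx m x))^2
        = (if stopped f (lam:ℝ) m (kidx m x) then 0 else (haarCoeff f m (kidx m x))^2) :=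
    fun m _ => by rw [if_neg (hns m)]
  rw [Finset.sum_congr rfl this]
  exact hM n

/-! ### the square function constraint controls partial sums -/

/-- dyadic rationals -/
def Dy : Set ℝ := Set.range (fun p : ℕ × ℕ => (p.2:ℝ)/2^p.1)

lemma Dy_null : volume Dy = 0 := (Set.countable_range _).measure_zero _

lemma indicator_dyadic {x : ℝ} (hx : x ∈ Set.Ico (0:ℝ) 1) (hxd : x ∉ Dy) (m k : ℕ) :
    (dyadicI m k).indicator (1 : ℝ → ℝ) x = if k = kidx m x then 1 else 0 := by
  by_cases hk : k = kidx m x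
  · rw [if_pos hk, hk, Set.indicator_of_mem]
    · rfl
    · exact Set.Ico_subset_Icc_self (kidx_mem hx m)
  · rw [if_neg hk, Set.indicator_of_notMem]
    intro hmem
    apply hk
    have h1 : (k:ℝ)/2^m < x := by
      rcases lt_or_eq_of_le hmem.1 with h | h
      · exact h
      · exact absurd ⟨(m, k), h⟩ hxd
    have h2 : x < ((k:ℝ)+1)/2^m := by
      rcases lt_or_eq_of_le hmem.2 with h | h
      · exact h
      · refine absurd ⟨(m, k+1), ?_⟩ hxd
        show ((k+1:ℕ):ℝ)/2^m = x
        push_cast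
        linarith
    exact (kidx_eq ⟨h1.le, h2⟩).symm

lemma partial_le_one {x : ℝ} (hx : x ∈ Set.Ico (0:ℝ) 1) (hxd : x ∉ Dy)
    (hsum : Summable (fun m => (haarCoeff f m (kidx m x))^2))
    (hsq : sqFn f x ≤ 1) (n : ℕ) :
    ∑ m ∈ Finset.range n, (haarCoeff f m (kidx m x))^2 ≤ 1 := by
  classical
  set g : ℕ × ℕ → ℝ :=
    fun p => (haarCoeff f p.1 p.2)^2 * (dyadicI p.1 p.2).indicator 1 x with hgdef
  have hg : ∀ p : ℕ × ℕ, g p = if p.2 = kidx p.1 x then (haarCoeff f p.1 p.2)^2 else 0 := by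
    intro p
    rw [hgdef]
    dsimp only
    rw [indicator_dyadic hx hxd]
    split
    · rw [mul_one]
    · rw [mul_zero]
  have hnn : ∀ p : ℕ × ℕ, 0 ≤ g p := by
    intro p; rw [hg]; split
    · positivity
    · exact le_rfl
  have hrows : ∀ m, Summable (fun k => g (m, k)) := by
    intro m
    apply summable_of_ne_finset_zero (s := {kidx m x})
    intro k hk
    rw [hg]
    exact if_neg (by simpa using hk)
  have hrowsum : ∀ m, (∑' k, g (m, k)) = (haarCoeff f m (kidx m x))^2 := by
    intro m
    rw [tsum_eq_single (kidx m x) (fun k hk => by rw [hg]; exact if_neg hk)]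
    rw [hg]
    exact if_pos rfl
  have hG : Summable g := by
    rw [summable_prod_of_nonneg hnn]
    refine ⟨hrows, ?_⟩
    apply Summable.congr hsum
    intro m
    exact (hrowsum m).symm
  have htsum_le : (∑' p, g p) ≤ 1 := by
    have h0 : 0 ≤ ∑' p, g p := tsum_nonneg hnn
    have h1 : Real.sqrt (∑' p, g p) ≤ 1 := hsq
    nlinarith [Real.sq_sqrt h0, Real.sqrt_nonneg (∑' p, g p)]
  have himg : ∑ m ∈ Finset.range n, (haarCoeff f m (kidx m x))^2
      = ∑ p ∈ (Finset.range n).image (fun m => (m, kidx m x)), g p := by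
    rw [Finset.sum_image (fun a _ b _ h => congrArg Prod.fst h)]
    apply Finset.sum_congr rfl
    intro m _
    rw [hg]
    exact (if_pos rfl).symm
  rw [himg]
  exact (Summable.sum_le_tsum _ (fun p _ => hnn p) hG).trans htsum_le

/-! ### variance bound and Cantelli -/

lemma cc_zero (hf : IntegrableOn f (Set.Icc 0 1) volume)
    (hm : (∫ t in Set.Icc (0 : ℝ) 1, f t) = 0) : cc f 0 0 = 0 := by
  rw [cc]
  have hJ : Jd 0 0 = Set.Ico (0:ℝ) 1 := by
    unfold Jd; norm_num
  rw [hJ]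
  have h1 : (∫ t in Set.Ico (0:ℝ) 1, FF f t) = ∫ t in Set.Icc (0:ℝ) 1, FF f t :=
    setIntegral_congr_set Ico_ae_eq_Icc
  have h2 : (∫ t in Set.Icc (0:ℝ) 1, FF f t) = ∫ t in Set.Icc (0:ℝ) 1, f t :=
    setIntegral_congr_fun measurableSet_Icc (fun t ht => Set.indicator_of_mem ht f)
  rw [h1, h2, hm]
  ring

lemma Q_le_one (hf : IntegrableOn f (Set.Icc 0 1) volume) (hFi : Integrable (FF f))
    (hcc0 : cc f 0 0 = 0)
    (hae : ∀ᵐ x : ℝ, x ∈ Set.Ico (0:ℝ) 1 →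
      ∀ n, ∑ m ∈ Finset.range n, (haarCoeff f m (kidx m x))^2 ≤ 1) :
    ∀ n, ∑ k ∈ Finset.range (2^n), (cc f n k)^2 / 2^n ≤ 1 := by
  intro n
  have key : ∀ n, ∑ k ∈ Finset.range (2^n), (cc f n k)^2 / 2^n
      = (cc f 0 0)^2 + ∑ m ∈ Finset.range n,
          (∑ k ∈ Finset.range (2^m), (haarCoeff f m k)^2 / 2^m) := by
    intro n
    induction n with
    | zero => simp
    | succ m ih => rw [Q_succ hf hFi, ih, Finset.sum_range_succ]; ring
  have hint : ∑ m ∈ Finset.range n, (∑ k ∈ Finset.range (2^m), (haarCoeff f m k)^2 / 2^m)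
      = ∫ x in Set.Ico (0:ℝ) 1, (∑ m ∈ Finset.range n, (haarCoeff f m (kidx m x))^2) := by
    rw [integral_finset_sum _
      (fun m _ => step_integrableOn (fun k => (haarCoeff f m k)^2) m)]
    apply Finset.sum_congr rfl
    intro m _
    exact (step_integral (fun k => (haarCoeff f m k)^2) m).symm
  have hle : (∫ x in Set.Ico (0:ℝ) 1, (∑ m ∈ Finset.range n, (haarCoeff f m (kidx m x))^2))
      ≤ ∫ _ in Set.Ico (0:ℝ) 1, (1:ℝ) := by
    apply integral_mono_ae
      (integrable_finset_sum _
        (fun m _ => step_integrableOn (fun k => (haarCoeff f m k)^2) m))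
      (integrable_const 1)
    rw [EventuallyLE, ae_restrict_iff' measurableSet_Ico]
    filter_upwards [hae] with x hx hx01
    exact hx hx01 n
  have hone : (∫ _ in Set.Ico (0:ℝ) 1, (1:ℝ)) = 1 := by simp
  rw [key n, hcc0]
  rw [hint]
  nlinarith [hle, hone.le, hone.ge]

open scoped Classical in
lemma cantelli (hFi : Integrable (FF f)) (hcc0 : cc f 0 0 = 0)
    (hQ : ∀ n, ∑ k ∈ Finset.range (2^n), (cc f n k)^2 / 2^n ≤ 1)
    {t : ℝ} (ht : 0 < t) (n : ℕ) :
    volume {x ∈ Set.Ico (0:ℝ) 1 | t ≤ cc f n (kidx n x)}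
      ≤ ENNReal.ofReal (1/(1+t^2)) := by
  rw [step_measure n (fun k => t ≤ cc f n k),
    ← ENNReal.ofReal_sum_of_nonneg (fun _ _ => by positivity)]
  apply ENNReal.ofReal_le_ofReal
  set c : ℝ := 1/t with hc
  have hcpos : 0 < c := by positivity
  set D : ℝ := (t + c)^2 with hD
  have hDpos : 0 < D := by positivity
  have hchain : ∑ k ∈ (Finset.range (2^n)).filter (fun k => t ≤ cc f n k), (1:ℝ)/2^n
      ≤ ∑ k ∈ Finset.range (2^n), ((cc f n k + c)^2 / D) / 2^n := by
    apply le_trans (Finset.sum_le_sum (f := fun k => (1:ℝ)/2^n)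
      (g := fun k => ((cc f n k + c)^2 / D) / 2^n) ?_)
    · apply Finset.sum_le_sum_of_subset_of_nonneg (Finset.filter_subset _ _)
      intro k _ _
      positivity
    · intro k hk
      have hkc : t ≤ cc f n k := (Finset.mem_filter.1 hk).2
      apply div_le_div_of_nonneg_right ?_ (by positivity) |>.trans_eq rfl
      rw [le_div_iff₀ hDpos, one_mul, hD]
      nlinarith
  have hexp : ∑ k ∈ Finset.range (2^n), ((cc f n k + c)^2 / D) / 2^n
      = ((∑ k ∈ Finset.range (2^n), (cc f n k)^2 / 2^n)
          + 2*c*(∑ k ∈ Finset.range (2^n), cc f n k / 2^n)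
          + c^2*(∑ k ∈ Finset.range (2^n), (1:ℝ)/2^n)) / D := by
    have e1 : ∀ k, (cc f n k + c)^2/D/2^n = ((cc f n k + c)^2/2^n)/D := fun k => by ring
    rw [Finset.sum_congr rfl (fun k _ => e1 k), ← Finset.sum_div]
    congr 1
    have e2 : ∀ k, (cc f n k + c)^2/2^n
        = (cc f n k)^2/2^n + (2*c)*(cc f n k/2^n) + c^2*((1:ℝ)/2^n) := fun k => by ring
    rw [Finset.sum_congr rfl (fun k _ => e2 k), Finset.sum_add_distrib, Finset.sum_add_distrib,
      ← Finset.mul_sum, ← Finset.mul_sum]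
    try ring
  have hBsum : ∑ k ∈ Finset.range (2^n), cc f n k / 2^n = 0 := by
    rw [sum_cc hFi, hcc0]
  have hCsum : ∑ k ∈ Finset.range (2^n), (1:ℝ)/2^n = 1 := by
    have hcast : ((2^n:ℕ):ℝ) = 2^n := by push_cast; rfl
    rw [Finset.sum_const, Finset.card_range, nsmul_eq_mul, hcast, mul_one_div,
      div_self (by positivity : ((2:ℝ)^n) ≠ 0)]
  have hDeq : (1 + c^2)/D = 1/(1+t^2) := by
    rw [hD, hc]
    field_simp
    ring
  calc ∑ k ∈ (Finset.range (2^n)).filter (fun k => t ≤ cc f n k), (1:ℝ)/2^n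
      ≤ ∑ k ∈ Finset.range (2^n), ((cc f n k + c)^2 / D) / 2^n := hchain
  _ = ((∑ k ∈ Finset.range (2^n), (cc f n k)^2 / 2^n)
        + 2*c*(∑ k ∈ Finset.range (2^n), cc f n k / 2^n)
        + c^2*(∑ k ∈ Finset.range (2^n), (1:ℝ)/2^n)) / D := hexp
  _ ≤ (1 + c^2)/D := by
      rw [hBsum, hCsum]
      apply div_le_div_of_nonneg_right ?_ hDpos.le |>.trans_eq rfl
      have := hQ n
      linarith
  _ = 1/(1+t^2) := hDeq

lemma ae_conv_cc (hFi : Integrable (FF f) volume) :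
    ∀ᵐ y : ℝ, y ∈ Set.Ico (0:ℝ) 1 →
      Tendsto (fun n => cc f n (kidx n y)) atTop (𝓝 (FF f y)) := by
  have := ae_conv (FF f) hFi
  exact this

end BP

open BP Set Filter Topology

theorem bellman_le_inv_one_add_sq :
    ∀ x : ℝ, 0 ≤ x → bellman x ≤ 1 / (1 + x ^ 2) := by
  intro x hx
  have hpos : (0:ℝ) < 1 + x^2 := by positivity
  apply Real.sSup_le ?_ (by positivity)
  rintro m ⟨f, ⟨hf, hmean, hsq⟩, rfl⟩
  have main : volume { y ∈ Set.Icc (0 : ℝ) 1 | x ≤ f y } ≤ ENNReal.ofReal (1/(1+x^2)) := by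
    rcases eq_or_lt_of_le hx with rfl | hxpos
    · calc volume {y ∈ Set.Icc (0:ℝ) 1 | (0:ℝ) ≤ f y} ≤ volume (Set.Icc (0:ℝ) 1) :=
        measure_mono (fun y hy => hy.1)
      _ = 1 := by rw [Real.volume_Icc]; norm_num
      _ ≤ ENNReal.ofReal (1/(1+(0:ℝ)^2)) := by norm_num
    · have hFi : Integrable (FF f) volume := hf.integrable_indicator measurableSet_Icc
      have hcc0 : cc f 0 0 = 0 := cc_zero hf hmean
      have hsq' : ∀ᵐ y : ℝ, y ∈ Set.Icc (0:ℝ) 1 → sqFn f y ≤ 1 :=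
        (ae_restrict_iff' measurableSet_Icc).1 hsq
      have hDy : ∀ᵐ y : ℝ, y ∉ Dy := measure_eq_zero_iff_ae_notMem.1 Dy_null
      have hptwise : ∀ᵐ y : ℝ, y ∈ Set.Ico (0:ℝ) 1 →
          ∀ n, ∑ m ∈ Finset.range n, (haarCoeff f m (kidx m y))^2 ≤ 1 := by
        filter_upwards [summable_ae hf hFi, hsq', hDy] with y hsum hs hd hy01
        exact partial_le_one hy01 hd (hsum hy01) (hs (Set.Ico_subset_Icc_self hy01)) 
      have hQ := Q_le_one hf hFi hcc0 hptwise
      apply ge_of_tendsto (f := fun t : ℝ => ENNReal.ofReal (1/(1+t^2))) (x := 𝓝[<] x)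
        ?_ ?_
      · apply (ENNReal.continuous_ofReal.tendsto _).comp
        apply Filter.Tendsto.mono_left ?_ nhdsWithin_le_nhds
        exact (continuous_const.div (by continuity) (fun t => by positivity)).tendsto x
      · filter_upwards [Ioo_mem_nhdsLT_of_mem (⟨hxpos, le_refl x⟩ : x ∈ Set.Ioc 0 x)]
          with t ht
        set S : ℕ → Set ℝ := fun n => {y ∈ Set.Ico (0:ℝ) 1 | t ≤ cc f n (kidx n y)} with hS
        set U : ℕ → Set ℝ := fun N => ⋂ n, ⋂ (_ : N ≤ n), S n with hU
        set E : Set ℝ := {y | ¬ (y ∈ Set.Ico (0:ℝ) 1 →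
          Tendsto (fun n => cc f n (kidx n y)) atTop (𝓝 (FF f y)))} with hE
        have hEnull : volume E = 0 := ae_iff.1 (ae_conv_cc hFi)
        have hsubset : {y ∈ Set.Icc (0:ℝ) 1 | x ≤ f y} ⊆ (E ∪ ({(1:ℝ)} : Set ℝ)) ∪ ⋃ N, U N := by
          intro y hy
          by_cases hyE : y ∈ E
          · exact Or.inl (Or.inl hyE)
          by_cases hy1 : y = (1:ℝ)
          · exact Or.inl (Or.inr (by simp [hy1]))
          have hy01 : y ∈ Set.Ico (0:ℝ) 1 := ⟨hy.1.1, lt_of_le_of_ne hy.1.2 hy1⟩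
          have htd : Tendsto (fun n => cc f n (kidx n y)) atTop (𝓝 (FF f y)) :=
            (not_not.1 hyE) hy01
          have hflarge : t < FF f y := by
            rw [FF, Set.indicator_of_mem hy.1]
            exact lt_of_lt_of_le ht.2 hy.2
          have hev : ∀ᶠ n in atTop, t < cc f n (kidx n y) :=
            htd.eventually (eventually_gt_nhds hflarge)
          obtain ⟨N, hN⟩ := eventually_atTop.1 hev
          refine Or.inr (Set.mem_iUnion.2 ⟨N, ?_⟩)
          exact Set.mem_iInter.2 fun n => Set.mem_iInter.2 fun hn => ⟨hy01, (hN n hn).le⟩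
        have hUmono : Monotone U := by
          intro N N' hNN' y hy
          exact Set.mem_iInter.2 fun n => Set.mem_iInter.2 fun hn =>
            Set.mem_iInter.1 (Set.mem_iInter.1 hy n) (le_trans hNN' hn)
        have hUle : ∀ N, volume (U N) ≤ ENNReal.ofReal (1/(1+t^2)) := by
          intro N
          calc volume (U N) ≤ volume (S N) :=
            measure_mono (fun y hy => Set.mem_iInter.1 (Set.mem_iInter.1 hy N) le_rfl)
          _ ≤ ENNReal.ofReal (1/(1+t^2)) := cantelli hFi hcc0 hQ ht.1 N
        have hUnion : volume (⋃ N, U N) ≤ ENNReal.ofReal (1/(1+t^2)) :=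
          le_of_tendsto (tendsto_measure_iUnion_atTop hUmono)
            (Eventually.of_forall hUle)
        calc volume {y ∈ Set.Icc (0:ℝ) 1 | x ≤ f y} ≤ volume ((E ∪ ({(1:ℝ)} : Set ℝ)) ∪ ⋃ N, U N) :=
          measure_mono hsubset
        _ ≤ volume (E ∪ ({(1:ℝ)} : Set ℝ)) + volume (⋃ N, U N) := measure_union_le _ _
        _ ≤ (volume E + volume ({(1:ℝ)} : Set ℝ)) + volume (⋃ N, U N) := by
            gcongr
            exact measure_union_le _ _
        _ = volume (⋃ N, U N) := by
            rw [hEnull, Real.volume_singleton]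
            simp
        _ ≤ ENNReal.ofReal (1/(1+t^2)) := hUnion
  exact ENNReal.toReal_le_of_le_ofReal (by positivity) main
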